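/- Let $\Gamma$ be a finite rooted tree with root $a$ and partial order $\preceq$ (where $s\preceq t$ iff $s$ lies on the path from the root to $t$), let $\Gamma^*=\Gamma\setminus\{a\}$, and let $1<p,q<\infty$ with $1/p+1/q=1$. Let $(u_t)_{t\in\Gamma^*}$, $(v_t)_{t\in\Gamma^*}$ be positive weights. Suppose that for some $\theta>1$, $A_{tree} := \sup_{t\in\Gamma^*} \big(\sum_{a\prec s\preceq t} u_s^{-q}\big)^{1/(\theta q)} \big(\sum_{s\succeq t} v_s^p (\sum_{a\prec r\preceq s} u_r^{-q})^{(p/q)(1-1/\theta)}\big)^{1/p} < \infty$. Then for every family of nonnegative reals $(d_t)_{t\in\Gamma^*}$, $\big(\sum_{s\in\Gamma^*} \big(v_s \sum_{a\prec t\preceq s} d_t\big)^p\big)^{1/p} \le \big(\tfrac{\theta}{\theta-1}\big)^{1/q} A_{tree} \big(\sum_{s\in\Gamma^*} (d_s u_s)^p\big)^{1/p}$. -/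

import Mathlib

open Finset
open scoped Classical

/-- `s ⪯ t` in the rooted tree with parent map `par`: `s` lies on the path from the root to `t`. -/
def treeLe {Γ : Type*} (par : Γ → Γ) (s t : Γ) : Prop := ∃ m : ℕ, par^[m] t = s

section aux

variable {Γ : Type*} (par : Γ → Γ) (a : Γ)

lemma treeLe_refl (t : Γ) : treeLe par t t := ⟨0, rfl⟩

lemma root_of_cycle (hroot : par a = a) (hreach : ∀ t, ∃ m : ℕ, par^[m] t = a)
    {t : Γ} {k : ℕ} (hk : k ≠ 0) (h : par^[k] t = t) : t = a := by
  obtain ⟨m, hm⟩ := hreach t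
  have hcyc : ∀ n : ℕ, par^[k * n] t = t := by
    intro n
    induction n with
    | zero => simp
    | succ n ih => rw [Nat.mul_succ, Function.iterate_add_apply, h, ih]
  have hm' : m ≤ k * m := Nat.le_mul_of_pos_left m (Nat.pos_of_ne_zero hk)
  have key : par^[k * m] t = a := by
    rw [← Nat.sub_add_cancel hm', Function.iterate_add_apply, hm,
      Function.iterate_fixed hroot]
  calc t = par^[k * m] t := (hcyc m).symm
    _ = a := key

lemma treeLe_root_iff (hroot : par a = a) {s : Γ} : treeLe par s a ↔ s = a := by
  constructor
  · rintro ⟨m, hm⟩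
    rw [Function.iterate_fixed hroot] at hm
    exact hm.symm
  · rintro rfl; exact treeLe_refl par _

lemma treeLe_step {r t : Γ} : treeLe par r t ↔ r = t ∨ treeLe par r (par t) := by
  constructor
  · rintro ⟨m, hm⟩
    cases m with
    | zero => exact Or.inl hm.symm
    | succ n =>
      right
      exact ⟨n, by rwa [Function.iterate_succ_apply] at hm⟩
  · rintro (rfl | ⟨m, hm⟩)
    · exact treeLe_refl par r
    · exact ⟨m + 1, by rw [Function.iterate_succ_apply]; exact hm⟩

lemma not_treeLe_parent (hroot : par a = a) (hreach : ∀ t, ∃ m : ℕ, par^[m] t = a)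
    {t : Γ} (ht : t ≠ a) : ¬ treeLe par t (par t) := by
  rintro ⟨m, hm⟩
  exact ht (root_of_cycle par a hroot hreach (k := m + 1) (Nat.succ_ne_zero m)
    (by rw [Function.iterate_succ_apply]; exact hm))

variable [Fintype Γ]

/-- The set of strict ancestors-or-self of `t` excluding the root: the path from the root to `t`. -/
noncomputable def pathSet (t : Γ) : Finset Γ := univ.filter (fun r => treeLe par r t ∧ r ≠ a)

/-- The shadowSet of `t`: all non-root vertices above `t`. -/
noncomputable def shadowSet (t : Γ) : Finset Γ := univ.filter (fun s => treeLe par t s ∧ s ≠ a)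

lemma pathSet_root (hroot : par a = a) : pathSet par a a = ∅ := by
  ext r
  simp only [pathSet, mem_filter, mem_univ, true_and, Finset.notMem_empty, iff_false]
  rw [treeLe_root_iff par a hroot]
  tauto

lemma mem_pathSet_self {t : Γ} (ht : t ≠ a) : t ∈ pathSet par a t := by
  simp only [pathSet, mem_filter, mem_univ, true_and]
  exact ⟨treeLe_refl par t, ht⟩

lemma pathSet_insert (hroot : par a = a) (hreach : ∀ t, ∃ m : ℕ, par^[m] t = a)
    {t : Γ} (ht : t ≠ a) :
    pathSet par a t = insert t (pathSet par a (par t)) ∧ t ∉ pathSet par a (par t) := by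
  constructor
  · ext r
    simp only [pathSet, mem_filter, mem_univ, true_and, mem_insert]
    rw [treeLe_step par]
    constructor
    · rintro ⟨(rfl | h), hr⟩
      · exact Or.inl rfl
      · exact Or.inr ⟨h, hr⟩
    · rintro (rfl | ⟨h, hr⟩)
      · exact ⟨Or.inl rfl, ht⟩
      · exact ⟨Or.inr h, hr⟩
  · simp only [pathSet, mem_filter, mem_univ, true_and]
    rintro ⟨h, -⟩
    exact not_treeLe_parent par a hroot hreach ht h

end aux

lemma conc_ineq {θ x1 x2 : ℝ} (hθ : 1 < θ) (h1 : 0 ≤ x1) (h12 : x1 ≤ x2) (h2 : 0 < x2) :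
    (x2 - x1) * x2 ^ (-(1/θ)) ≤ θ/(θ-1) * (x2 ^ (1 - 1/θ) - x1 ^ (1 - 1/θ)) := by
  have hθ0 : (0:ℝ) < θ := lt_trans one_pos hθ
  set σ : ℝ := 1 - 1/θ with hσdef
  have h1θ : 0 < 1/θ := by positivity
  have h1θ' : 1/θ < 1 := by rw [div_lt_one hθ0]; exact hθ
  have hσ0 : 0 < σ := by rw [hσdef]; linarith
  have hσ1 : σ < 1 := by rw [hσdef]; linarith
  have key : x1 ^ σ * x2 ^ (1 - σ) ≤ σ * x1 + (1 - σ) * x2 :=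
    Real.geom_mean_le_arith_mean2_weighted hσ0.le (by linarith) h1 h2.le (by ring)
  have hy : (0:ℝ) < x2 ^ (σ - 1) := Real.rpow_pos_of_pos h2 _
  have hz : x2 ^ (1 - σ) * x2 ^ (σ - 1) = 1 := by
    rw [← Real.rpow_add h2]
    norm_num
  have hx2σ : x2 ^ σ = x2 * x2 ^ (σ - 1) := by
    have h := Real.rpow_add h2 1 (σ - 1)
    rw [show (1:ℝ) + (σ - 1) = σ by ring, Real.rpow_one] at h
    exact h
  have key2 : x1 ^ σ ≤ (σ * x1 + (1 - σ) * x2) * x2 ^ (σ - 1) := by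
    calc x1 ^ σ = x1 ^ σ * (x2 ^ (1 - σ) * x2 ^ (σ - 1)) := by rw [hz, mul_one]
      _ = (x1 ^ σ * x2 ^ (1 - σ)) * x2 ^ (σ - 1) := by ring
      _ ≤ _ := mul_le_mul_of_nonneg_right key hy.le
  have hexp : -(1/θ) = σ - 1 := by rw [hσdef]; ring
  have hc : θ/(θ-1) = 1/σ := by
    rw [hσdef]
    rw [div_eq_div_iff (by linarith) (by linarith)]
    field_simp
  rw [hexp, hc, one_div, ← div_eq_inv_mul, le_div_iff₀ hσ0]
  nlinarith [key2, hx2σ, hy.le]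

section tree

variable {Γ : Type*} [Fintype Γ] (par : Γ → Γ) (a : Γ)

/-- `N(t) = ∑_{a ≺ r ⪯ t} u r ^ (-q)`. -/
noncomputable def Nfun (u : Γ → ℝ) (q t : ℝ) (x : Γ) : ℝ :=
  ∑ r ∈ pathSet par a x, u r ^ (-q)

variable (q θ : ℝ) (u : Γ → ℝ)

lemma Nfun_nonneg (hu : ∀ t, t ≠ a → 0 < u t) (x : Γ) : 0 ≤ Nfun par a u q θ x := by
  refine Finset.sum_nonneg fun r hr => ?_
  simp only [pathSet, mem_filter] at hr
  exact (Real.rpow_pos_of_pos (hu r hr.2.2) _).le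

lemma Nfun_pos (hu : ∀ t, t ≠ a → 0 < u t) {x : Γ} (hx : x ≠ a) : 0 < Nfun par a u q θ x := by
  refine Finset.sum_pos (fun r hr => ?_) ⟨x, mem_pathSet_self par a hx⟩
  simp only [pathSet, mem_filter] at hr
  exact Real.rpow_pos_of_pos (hu r hr.2.2) _

lemma tele (hroot : par a = a) (hreach : ∀ t, ∃ m : ℕ, par^[m] t = a)
    (hu : ∀ t, t ≠ a → 0 < u t) (hθ : 1 < θ) :
    ∀ (n : ℕ) (t : Γ), par^[n] t = a → t ≠ a →
      ∑ r ∈ pathSet par a t, u r ^ (-q) * (Nfun par a u q θ r) ^ (-(1/θ))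
        ≤ θ/(θ-1) * (Nfun par a u q θ t) ^ (1 - 1/θ) := by
  intro n
  induction n with
  | zero => intro t h ht; exact absurd h ht
  | succ n ih =>
    intro t h ht
    obtain ⟨hins, hnot⟩ := pathSet_insert par a hroot hreach ht
    have hNt_eq : Nfun par a u q θ t = u t ^ (-q) + Nfun par a u q θ (par t) := by
      rw [Nfun, hins, Finset.sum_insert hnot]; rfl
    have hNpt0 : 0 ≤ Nfun par a u q θ (par t) := Nfun_nonneg par a q θ u hu _
    have hNtpos : 0 < Nfun par a u q θ t := Nfun_pos par a q θ u hu ht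
    have hut : 0 < u t ^ (-q) := Real.rpow_pos_of_pos (hu t ht) _
    have hle : Nfun par a u q θ (par t) ≤ Nfun par a u q θ t := by rw [hNt_eq]; linarith
    have hsub : Nfun par a u q θ t - Nfun par a u q θ (par t) = u t ^ (-q) := by
      rw [hNt_eq]; ring
    have hsum : ∑ r ∈ pathSet par a t, u r ^ (-q) * (Nfun par a u q θ r) ^ (-(1/θ))
        = u t ^ (-q) * (Nfun par a u q θ t) ^ (-(1/θ))
          + ∑ r ∈ pathSet par a (par t), u r ^ (-q) * (Nfun par a u q θ r) ^ (-(1/θ)) := by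
      rw [hins, Finset.sum_insert hnot]
    have hstep : u t ^ (-q) * (Nfun par a u q θ t) ^ (-(1/θ))
        ≤ θ/(θ-1) * ((Nfun par a u q θ t) ^ (1 - 1/θ)
            - (Nfun par a u q θ (par t)) ^ (1 - 1/θ)) := by
      rw [← hsub]
      exact conc_ineq hθ hNpt0 hle hNtpos
    by_cases hpa : par t = a
    · have hemp : pathSet par a (par t) = ∅ := by rw [hpa]; exact pathSet_root par a hroot
      have hNpt_eq : Nfun par a u q θ (par t) = 0 := by rw [Nfun, hemp, Finset.sum_empty]
      rw [hsum, hemp, Finset.sum_empty, add_zero]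
      refine hstep.trans (le_of_eq ?_)
      rw [hNpt_eq, Real.zero_rpow (by
        have hθ0 : (0:ℝ) < θ := by linarith
        have h1 : 1/θ < 1 := by rw [div_lt_one hθ0]; exact hθ
        intro hc
        rw [sub_eq_zero] at hc
        linarith), sub_zero]
    · have hn : par^[n] (par t) = a := by
        rw [← Function.iterate_succ_apply]; exact h
      have htail := ih (par t) hn hpa
      rw [hsum]
      calc _ ≤ θ/(θ-1) * ((Nfun par a u q θ t) ^ (1 - 1/θ)
              - (Nfun par a u q θ (par t)) ^ (1 - 1/θ))
            + θ/(θ-1) * (Nfun par a u q θ (par t)) ^ (1 - 1/θ) := add_le_add hstep htail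
        _ = θ/(θ-1) * (Nfun par a u q θ t) ^ (1 - 1/θ) := by ring

end tree

section main

variable {Γ : Type*} [Fintype Γ]

theorem stmt3' (a : Γ) (par : Γ → Γ)
    (hroot : par a = a) (hreach : ∀ t, ∃ m : ℕ, par^[m] t = a)
    (p q θ : ℝ) (hp : 1 < p) (hq : 1 < q) (hpq : 1 / p + 1 / q = 1) (hθ : 1 < θ)
    (u v : Γ → ℝ) (hu : ∀ t, t ≠ a → 0 < u t) (hv : ∀ t, t ≠ a → 0 < v t)
    (A : ℝ)
    (hA : ∀ t, t ≠ a →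
      (Nfun par a u q θ t) ^ (1 / (θ * q)) *
        (∑ s ∈ shadowSet par a t,
          v s ^ p * (Nfun par a u q θ s) ^ ((p / q) * (1 - 1 / θ))) ^ (1 / p)
      ≤ A)
    (d : Γ → ℝ) (hd : ∀ t, 0 ≤ d t) :
    (∑ s ∈ Finset.univ.filter (fun s => s ≠ a),
        (v s * ∑ t ∈ pathSet par a s, d t) ^ p) ^ (1 / p)
      ≤ (θ / (θ - 1)) ^ (1 / q) * A *
        (∑ s ∈ Finset.univ.filter (fun s => s ≠ a), (d s * u s) ^ p) ^ (1 / p) := by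
  have hp0 : (0:ℝ) < p := by linarith
  have hq0 : (0:ℝ) < q := by linarith
  have hθ0 : (0:ℝ) < θ := by linarith
  have hθ1 : (0:ℝ) < θ - 1 := by linarith
  have hcpos : (0:ℝ) < θ/(θ-1) := div_pos hθ0 hθ1
  have hconj : p.HolderConjugate q := Real.holderConjugate_iff.mpr ⟨hp, by rw [← one_div, ← one_div]; exact hpq⟩
  set N : Γ → ℝ := Nfun par a u q θ with hN
  set Gs : Finset Γ := Finset.univ.filter (fun s => s ≠ a) with hGsdef
  by_cases hGs : Gs = ∅
  · rw [hGs]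
    simp only [Finset.sum_empty, Real.zero_rpow (one_div_pos.mpr hp0).ne', mul_zero, le_refl]
  · obtain ⟨t0, ht0m⟩ := Finset.nonempty_iff_ne_empty.mpr hGs
    have ht0 : t0 ≠ a := (Finset.mem_filter.mp ht0m).2
    have hBnonneg : ∀ t, 0 ≤ ∑ s ∈ shadowSet par a t,
        v s ^ p * (N s) ^ ((p/q)*(1-1/θ)) := by
      intro t
      refine Finset.sum_nonneg fun s hs => ?_
      simp only [shadowSet, Finset.mem_filter] at hs
      exact mul_nonneg (Real.rpow_nonneg (hv s hs.2.2).le _)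
        (Real.rpow_nonneg (Nfun_nonneg par a q θ u hu s) _)
    have hA0 : 0 ≤ A :=
      le_trans (mul_nonneg (Real.rpow_nonneg (Nfun_nonneg par a q θ u hu t0) _)
        (Real.rpow_nonneg (hBnonneg t0) _)) (hA t0 ht0)
    have hmemP : ∀ s, ∀ t ∈ pathSet par a s, t ≠ a := by
      intro s t ht
      simp only [pathSet, Finset.mem_filter] at ht
      exact ht.2.2
    -- Hölder step, per vertex s
    have hhold : ∀ s, s ≠ a → (∑ t ∈ pathSet par a s, d t) ^ p
        ≤ (θ/(θ-1)) ^ (p/q) * (N s) ^ ((p/q)*(1-1/θ))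
          * ∑ t ∈ pathSet par a s, (d t * u t) ^ p * (N t) ^ (1/(θ*q)*p) := by
      intro s hs
      set f : Γ → ℝ := fun t => d t * u t * (N t) ^ (1/(θ*q)) with hf
      set g : Γ → ℝ := fun t => (u t)⁻¹ * (N t) ^ (-(1/(θ*q))) with hg
      have hfnn : ∀ t ∈ pathSet par a s, 0 ≤ f t := by
        intro t ht
        exact mul_nonneg (mul_nonneg (hd t) (hu t (hmemP s t ht)).le)
          (Real.rpow_nonneg (Nfun_nonneg par a q θ u hu t) _)
      have hgnn : ∀ t ∈ pathSet par a s, 0 ≤ g t := by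
        intro t ht
        exact mul_nonneg (inv_nonneg.mpr (hu t (hmemP s t ht)).le)
          (Real.rpow_nonneg (Nfun_nonneg par a q θ u hu t) _)
      set X := ∑ t ∈ pathSet par a s, (f t) ^ p with hX
      set Y := ∑ t ∈ pathSet par a s, (g t) ^ q with hY
      have hXnn : 0 ≤ X := Finset.sum_nonneg fun t ht => Real.rpow_nonneg (hfnn t ht) _
      have hYnn : 0 ≤ Y := Finset.sum_nonneg fun t ht => Real.rpow_nonneg (hgnn t ht) _
      have hD0 : 0 ≤ ∑ t ∈ pathSet par a s, d t := Finset.sum_nonneg fun t _ => hd t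
      have h1 : ∑ t ∈ pathSet par a s, d t ≤ X ^ (1/p) * Y ^ (1/q) := by
        have hH := Real.inner_le_Lp_mul_Lq (pathSet par a s) f g hconj
        have habsf : ∑ t ∈ pathSet par a s, |f t| ^ p = X :=
          Finset.sum_congr rfl fun t ht => by rw [abs_of_nonneg (hfnn t ht)]
        have habsg : ∑ t ∈ pathSet par a s, |g t| ^ q = Y :=
          Finset.sum_congr rfl fun t ht => by rw [abs_of_nonneg (hgnn t ht)]
        rw [habsf, habsg] at hH
        refine le_trans (le_of_eq (Finset.sum_congr rfl fun t ht => ?_)) hH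
        have htne := hmemP s t ht
        have hNt : 0 < N t := Nfun_pos par a q θ u hu htne
        have hone : (N t) ^ (1/(θ*q)) * (N t) ^ (-(1/(θ*q))) = 1 := by
          rw [← Real.rpow_add hNt]
          norm_num
        show d t = f t * g t
        rw [hf, hg]
        calc d t = d t * (u t * (u t)⁻¹) * ((N t) ^ (1/(θ*q)) * (N t) ^ (-(1/(θ*q)))) := by
              rw [mul_inv_cancel₀ (ne_of_gt (hu t htne)), hone, mul_one, mul_one]
          _ = d t * u t * (N t) ^ (1/(θ*q)) * ((u t)⁻¹ * (N t) ^ (-(1/(θ*q)))) := by ring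
      have hYle : Y ≤ θ/(θ-1) * (N s) ^ (1 - 1/θ) := by
        obtain ⟨n, hn⟩ := hreach s
        refine le_trans (le_of_eq ?_) (tele par a q θ u hroot hreach hu hθ n s hn hs)
        rw [hY]
        refine Finset.sum_congr rfl fun t ht => ?_
        have htne := hmemP s t ht
        have hut := hu t htne
        have hNtnn : (0:ℝ) ≤ N t := Nfun_nonneg par a q θ u hu t
        rw [hg]
        show ((u t)⁻¹ * (N t) ^ (-(1/(θ*q)))) ^ q = u t ^ (-q) * (Nfun par a u q θ t) ^ (-(1/θ))
        rw [Real.mul_rpow (inv_nonneg.mpr hut.le) (Real.rpow_nonneg hNtnn _),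
          Real.inv_rpow hut.le, ← Real.rpow_neg hut.le,
          ← Real.rpow_mul hNtnn,
          show -(1/(θ*q)) * q = -(1/θ) by field_simp]
      have h3 : (∑ t ∈ pathSet par a s, d t) ^ p ≤ X * Y ^ (p/q) := by
        calc (∑ t ∈ pathSet par a s, d t) ^ p ≤ (X ^ (1/p) * Y ^ (1/q)) ^ p :=
              Real.rpow_le_rpow hD0 h1 hp0.le
          _ = (X ^ (1/p)) ^ p * (Y ^ (1/q)) ^ p :=
              Real.mul_rpow (Real.rpow_nonneg hXnn _) (Real.rpow_nonneg hYnn _)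
          _ = X * Y ^ (p/q) := by
              rw [← Real.rpow_mul hXnn, ← Real.rpow_mul hYnn, one_div,
                inv_mul_cancel₀ (ne_of_gt hp0), Real.rpow_one, one_div, inv_mul_eq_div]
      have h4 : Y ^ (p/q) ≤ (θ/(θ-1)) ^ (p/q) * (N s) ^ ((p/q)*(1-1/θ)) := by
        calc Y ^ (p/q) ≤ (θ/(θ-1) * (N s) ^ (1-1/θ)) ^ (p/q) :=
              Real.rpow_le_rpow hYnn hYle (by positivity)
          _ = (θ/(θ-1)) ^ (p/q) * ((N s) ^ (1-1/θ)) ^ (p/q) :=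
              Real.mul_rpow hcpos.le (Real.rpow_nonneg (Nfun_nonneg par a q θ u hu s) _)
          _ = (θ/(θ-1)) ^ (p/q) * (N s) ^ ((p/q)*(1-1/θ)) := by
              rw [← Real.rpow_mul (Nfun_nonneg par a q θ u hu s), mul_comm (1-1/θ) (p/q)]
      have hXeq : X = ∑ t ∈ pathSet par a s, (d t * u t) ^ p * (N t) ^ (1/(θ*q)*p) := by
        rw [hX]
        refine Finset.sum_congr rfl fun t ht => ?_
        have htne := hmemP s t ht
        rw [hf]
        show (d t * u t * (N t) ^ (1/(θ*q))) ^ p = _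
        rw [Real.mul_rpow (mul_nonneg (hd t) (hu t htne).le)
            (Real.rpow_nonneg (Nfun_nonneg par a q θ u hu t) _),
          ← Real.rpow_mul (Nfun_nonneg par a q θ u hu t)]
      calc (∑ t ∈ pathSet par a s, d t) ^ p ≤ X * Y ^ (p/q) := h3
        _ ≤ X * ((θ/(θ-1)) ^ (p/q) * (N s) ^ ((p/q)*(1-1/θ))) :=
            mul_le_mul_of_nonneg_left h4 hXnn
        _ = (θ/(θ-1)) ^ (p/q) * (N s) ^ ((p/q)*(1-1/θ)) * X := by ring
        _ = _ := by rw [hXeq]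

    -- bound on the shadow sums from hA
    set B : Γ → ℝ := fun t => ∑ s ∈ shadowSet par a t, v s ^ p * (N s) ^ ((p/q)*(1-1/θ)) with hBdef
    have hBbound : ∀ t, t ≠ a → (N t) ^ (1/(θ*q)*p) * B t ≤ A ^ p := by
      intro t ht
      have hNt : 0 < N t := Nfun_pos par a q θ u hu ht
      have hNtp : (0:ℝ) < (N t) ^ (1/(θ*q)) := Real.rpow_pos_of_pos hNt _
      have h1 : B t ^ (1/p) ≤ A / (N t) ^ (1/(θ*q)) := by
        rw [le_div_iff₀ hNtp, mul_comm]
        exact hA t ht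
      have h2 : B t ≤ (A / (N t) ^ (1/(θ*q))) ^ p := by
        have h := Real.rpow_le_rpow (Real.rpow_nonneg (hBnonneg t) _) h1 hp0.le
        rwa [← Real.rpow_mul (hBnonneg t), show (1:ℝ)/p*p = 1 by field_simp,
          Real.rpow_one] at h
      calc (N t) ^ (1/(θ*q)*p) * B t ≤ (N t) ^ (1/(θ*q)*p) * (A / (N t) ^ (1/(θ*q))) ^ p :=
            mul_le_mul_of_nonneg_left h2 (Real.rpow_nonneg hNt.le _)
        _ = A ^ p := by
            rw [Real.div_rpow hA0 hNtp.le, ← Real.rpow_mul hNt.le, mul_comm,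
              div_mul_cancel₀ _ (ne_of_gt (Real.rpow_pos_of_pos hNt _))]
    have step1 : ∀ s ∈ Gs, (v s * ∑ t ∈ pathSet par a s, d t) ^ p
        ≤ ∑ t ∈ pathSet par a s, (θ/(θ-1)) ^ (p/q) *
            ((v s ^ p * (N s) ^ ((p/q)*(1-1/θ))) * ((d t * u t) ^ p * (N t) ^ (1/(θ*q)*p))) := by
      intro s hsm
      have hs : s ≠ a := by
        rw [hGsdef] at hsm; exact (Finset.mem_filter.mp hsm).2
      have hD0 : 0 ≤ ∑ t ∈ pathSet par a s, d t := Finset.sum_nonneg fun t _ => hd t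
      calc (v s * ∑ t ∈ pathSet par a s, d t) ^ p
          = v s ^ p * (∑ t ∈ pathSet par a s, d t) ^ p :=
            Real.mul_rpow (hv s hs).le hD0
        _ ≤ v s ^ p * ((θ/(θ-1)) ^ (p/q) * (N s) ^ ((p/q)*(1-1/θ))
              * ∑ t ∈ pathSet par a s, (d t * u t) ^ p * (N t) ^ (1/(θ*q)*p)) :=
            mul_le_mul_of_nonneg_left (hhold s hs) (Real.rpow_nonneg (hv s hs).le _)
        _ = (θ/(θ-1)) ^ (p/q) * (v s ^ p * (N s) ^ ((p/q)*(1-1/θ))) *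
              ∑ t ∈ pathSet par a s, (d t * u t) ^ p * (N t) ^ (1/(θ*q)*p) := by ring
        _ = ∑ t ∈ pathSet par a s, (θ/(θ-1)) ^ (p/q) *
              ((v s ^ p * (N s) ^ ((p/q)*(1-1/θ))) * ((d t * u t) ^ p * (N t) ^ (1/(θ*q)*p))) := by
            rw [Finset.mul_sum]
            exact Finset.sum_congr rfl fun t ht => by ring
    have hswap : ∑ s ∈ Gs, ∑ t ∈ pathSet par a s,
          (θ/(θ-1)) ^ (p/q) *
            ((v s ^ p * (N s) ^ ((p/q)*(1-1/θ))) * ((d t * u t) ^ p * (N t) ^ (1/(θ*q)*p)))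
        = ∑ t ∈ Gs, ∑ s ∈ shadowSet par a t,
          (θ/(θ-1)) ^ (p/q) *
            ((v s ^ p * (N s) ^ ((p/q)*(1-1/θ))) * ((d t * u t) ^ p * (N t) ^ (1/(θ*q)*p))) := by
      refine Finset.sum_comm' ?_
      intro x y
      simp only [hGsdef, pathSet, shadowSet, Finset.mem_filter, Finset.mem_univ, true_and]
      tauto
    have step2 : ∀ t ∈ Gs, ∑ s ∈ shadowSet par a t,
          (θ/(θ-1)) ^ (p/q) *
            ((v s ^ p * (N s) ^ ((p/q)*(1-1/θ))) * ((d t * u t) ^ p * (N t) ^ (1/(θ*q)*p)))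
        ≤ (θ/(θ-1)) ^ (p/q) * A ^ p * (d t * u t) ^ p := by
      intro t htm
      have ht : t ≠ a := by rw [hGsdef] at htm; exact (Finset.mem_filter.mp htm).2
      have hdu : 0 ≤ (d t * u t) ^ p := Real.rpow_nonneg (mul_nonneg (hd t) (hu t ht).le) _
      have heq : ∑ s ∈ shadowSet par a t,
            (θ/(θ-1)) ^ (p/q) *
              ((v s ^ p * (N s) ^ ((p/q)*(1-1/θ))) * ((d t * u t) ^ p * (N t) ^ (1/(θ*q)*p)))
          = (θ/(θ-1)) ^ (p/q) * ((d t * u t) ^ p * ((N t) ^ (1/(θ*q)*p) * B t)) := by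
        simp only [hBdef]
        rw [← Finset.mul_sum, ← Finset.sum_mul]
        ring
      rw [heq]
      calc (θ/(θ-1)) ^ (p/q) * ((d t * u t) ^ p * ((N t) ^ (1/(θ*q)*p) * B t))
          ≤ (θ/(θ-1)) ^ (p/q) * ((d t * u t) ^ p * A ^ p) :=
            mul_le_mul_of_nonneg_left
              (mul_le_mul_of_nonneg_left (hBbound t ht) hdu)
              (Real.rpow_nonneg hcpos.le _)
        _ = (θ/(θ-1)) ^ (p/q) * A ^ p * (d t * u t) ^ p := by ring
    have hmain : ∑ s ∈ Gs, (v s * ∑ t ∈ pathSet par a s, d t) ^ p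
        ≤ (θ/(θ-1)) ^ (p/q) * A ^ p * ∑ s ∈ Gs, (d s * u s) ^ p := by
      calc ∑ s ∈ Gs, (v s * ∑ t ∈ pathSet par a s, d t) ^ p
          ≤ ∑ s ∈ Gs, ∑ t ∈ pathSet par a s, (θ/(θ-1)) ^ (p/q) *
              ((v s ^ p * (N s) ^ ((p/q)*(1-1/θ))) * ((d t * u t) ^ p * (N t) ^ (1/(θ*q)*p))) :=
            Finset.sum_le_sum step1
        _ = ∑ t ∈ Gs, ∑ s ∈ shadowSet par a t, (θ/(θ-1)) ^ (p/q) *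
              ((v s ^ p * (N s) ^ ((p/q)*(1-1/θ))) * ((d t * u t) ^ p * (N t) ^ (1/(θ*q)*p))) :=
            hswap
        _ ≤ ∑ t ∈ Gs, (θ/(θ-1)) ^ (p/q) * A ^ p * (d t * u t) ^ p :=
            Finset.sum_le_sum step2
        _ = (θ/(θ-1)) ^ (p/q) * A ^ p * ∑ t ∈ Gs, (d t * u t) ^ p := by
            rw [← Finset.mul_sum]
    have hLnn : 0 ≤ ∑ s ∈ Gs, (v s * ∑ t ∈ pathSet par a s, d t) ^ p := by
      refine Finset.sum_nonneg fun s hsm => ?_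
      have hs : s ≠ a := by rw [hGsdef] at hsm; exact (Finset.mem_filter.mp hsm).2
      exact Real.rpow_nonneg
        (mul_nonneg (hv s hs).le (Finset.sum_nonneg fun t _ => hd t)) _
    have hTnn : 0 ≤ ∑ s ∈ Gs, (d s * u s) ^ p := by
      refine Finset.sum_nonneg fun s hsm => ?_
      have hs : s ≠ a := by rw [hGsdef] at hsm; exact (Finset.mem_filter.mp hsm).2
      exact Real.rpow_nonneg (mul_nonneg (hd s) (hu s hs).le) _
    have hfin := Real.rpow_le_rpow hLnn hmain (le_of_lt (one_div_pos.mpr hp0))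
    refine le_trans hfin (le_of_eq ?_)
    rw [Real.mul_rpow (mul_nonneg (Real.rpow_nonneg hcpos.le _) (Real.rpow_nonneg hA0 _)) hTnn,
      Real.mul_rpow (Real.rpow_nonneg hcpos.le _) (Real.rpow_nonneg hA0 _),
      ← Real.rpow_mul hcpos.le, ← Real.rpow_mul hA0,
      show p/q * (1/p) = 1/q by field_simp,
      show p * (1/p) = 1 by field_simp,
      Real.rpow_one]

end main

theorem stmt3 {Γ : Type*} [Fintype Γ] (a : Γ) (par : Γ → Γ)
    (hroot : par a = a) (hreach : ∀ t, ∃ m : ℕ, par^[m] t = a)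
    (p q θ : ℝ) (hp : 1 < p) (hq : 1 < q) (hpq : 1 / p + 1 / q = 1) (hθ : 1 < θ)
    (u v : Γ → ℝ) (hu : ∀ t, t ≠ a → 0 < u t) (hv : ∀ t, t ≠ a → 0 < v t)
    (A : ℝ)
    (hA : ∀ t, t ≠ a →
      (∑ s ∈ Finset.univ.filter (fun s => treeLe par s t ∧ s ≠ a), u s ^ (-q)) ^ (1 / (θ * q)) *
        (∑ s ∈ Finset.univ.filter (fun s => treeLe par t s ∧ s ≠ a),
            v s ^ p *
              (∑ r ∈ Finset.univ.filter (fun r => treeLe par r s ∧ r ≠ a), u r ^ (-q)) ^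
                ((p / q) * (1 - 1 / θ))) ^ (1 / p)
      ≤ A)
    (d : Γ → ℝ) (hd : ∀ t, 0 ≤ d t) :
    (∑ s ∈ Finset.univ.filter (fun s => s ≠ a),
        (v s * ∑ t ∈ Finset.univ.filter (fun t => treeLe par t s ∧ t ≠ a), d t) ^ p) ^ (1 / p)
      ≤ (θ / (θ - 1)) ^ (1 / q) * A *
        (∑ s ∈ Finset.univ.filter (fun s => s ≠ a), (d s * u s) ^ p) ^ (1 / p) := by
  exact stmt3' a par hroot hreach p q θ hp hq hpq hθ u v hu hv A hA d hd
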